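/- Let r(A) and d(A) denote the number of rises and descents of a word A over {1,2,3,4}. If A begins with 1 and ends with 3, then r(φ2(A)) = d(A) and d(φ2(A)) = r(A). -/

import Mathlib

/-- φ1: reverse the word and apply 1↦4, 2↦1, 3↦2, 4↦3. -/
def phi1 (A : List ℕ) : List ℕ := A.reverse.map (fun x => if x = 1 then 4 else x - 1)

/-- φ2: reverse the word and apply 1↦2, 2↦3, 3↦4, 4↦1. -/
def phi2 (A : List ℕ) : List ℕ := A.reverse.map (fun x => if x = 4 then 1 else x + 1)

/-- The Peano words: `peano 1 = 123`, `peano (n+1) = φ1(Xₙ) 1 Xₙ 2 Xₙ 3 φ2(Xₙ)`. -/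
def peano : ℕ → List ℕ
  | 0 => []
  | 1 => [1, 2, 3]
  | n + 2 =>
      phi1 (peano (n + 1)) ++ [1] ++ peano (n + 1) ++ [2] ++ peano (n + 1)
        ++ [3] ++ phi2 (peano (n + 1))

/-- Number of rises of a word. -/
def rises (w : List ℕ) : ℕ := ((w.zip w.tail).filter (fun p => p.1 < p.2)).length

/-- Number of descents of a word. -/
def descents (w : List ℕ) : ℕ := ((w.zip w.tail).filter (fun p => p.2 < p.1)).length

/-- adjacent pairs -/
def prs (l : List ℕ) : List (ℕ × ℕ) := l.zip l.tail

lemma prs_nil : prs [] = [] := rfl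
lemma prs_single (a : ℕ) : prs [a] = [] := rfl
lemma prs_cons (a b : ℕ) (t : List ℕ) : prs (a :: b :: t) = (a, b) :: prs (b :: t) := rfl

lemma prs_snoc : ∀ (l : List ℕ) (x a : ℕ),
    prs ((l ++ [x]) ++ [a]) = prs (l ++ [x]) ++ [(x, a)]
  | [], x, a => rfl
  | [y], x, a => rfl
  | y :: z :: l, x, a => by
    have := prs_snoc (z :: l) x a
    simp only [List.cons_append, prs_cons] at *
    rw [this]

lemma prs_reverse : ∀ l : List ℕ, prs l.reverse = ((prs l).map Prod.swap).reverse
  | [] => rfl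
  | [a] => rfl
  | a :: b :: t => by
    have hrev : (b :: t).reverse = t.reverse ++ [b] := by simp
    have h1 : (a :: b :: t).reverse = (t.reverse ++ [b]) ++ [a] := by simp
    rw [h1, prs_snoc, ← hrev, prs_reverse (b :: t), prs_cons]
    simp

lemma prs_map (f : ℕ → ℕ) : ∀ l : List ℕ, prs (l.map f) = (prs l).map (Prod.map f f) := by
  intro l
  unfold prs
  rw [← List.map_tail, List.zip_map]

lemma countP_add_countP {p1 p2 q1 q2 : ℕ × ℕ → Bool} :
    ∀ (l : List (ℕ × ℕ)),
    (∀ x ∈ l, (if p1 x then 1 else 0) + (if p2 x then 1 else 0)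
      = (if q1 x then 1 else 0) + (if q2 x then 1 else 0)) →
    l.countP p1 + l.countP p2 = l.countP q1 + l.countP q2
  | [], _ => rfl
  | x :: l, h => by
    have ih := countP_add_countP l (fun y hy => h y (List.mem_cons_of_mem _ hy))
    have hx := h x List.mem_cons_self
    simp only [List.countP_cons]
    split_ifs at * <;> omega

/-- boundary lemma: # rises into a block of 4s = # descents out, up to endpoints -/
lemma boundary : ∀ l : List ℕ,
    (prs l).countP (fun p => p.2 == 4 && p.1 != 4)
      + (if l.head? = some 4 then 1 else 0)
    = (prs l).countP (fun p => p.1 == 4 && p.2 != 4)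
      + (if l.getLast? = some 4 then 1 else 0)
  | [] => rfl
  | [a] => by simp [prs_single]
  | a :: b :: t => by
    have ih := boundary (b :: t)
    rw [prs_cons]
    simp only [List.countP_cons, List.head?_cons] at *
    have hlast : (a :: b :: t).getLast? = (b :: t).getLast? := by
      rw [List.getLast?_cons_cons]
    rw [hlast]
    by_cases ha : a = 4 <;> by_cases hb : b = 4 <;> simp [ha, hb] at * <;> omega

theorem phi2_rises_descents (A : List ℕ) (hA : ∀ x ∈ A, x = 1 ∨ x = 2 ∨ x = 3 ∨ x = 4)
    (h1 : A.head? = some 1) (h3 : A.getLast? = some 3) :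
    rises (phi2 A) = descents A ∧ descents (phi2 A) = rises A := by
  set σ : ℕ → ℕ := fun x => if x = 4 then 1 else x + 1 with hσ
  -- membership of pairs
  have hmem : ∀ p ∈ prs A, (p.1 = 1 ∨ p.1 = 2 ∨ p.1 = 3 ∨ p.1 = 4)
      ∧ (p.2 = 1 ∨ p.2 = 2 ∨ p.2 = 3 ∨ p.2 = 4) := by
    intro p hp
    obtain ⟨h1', h2'⟩ := List.of_mem_zip hp
    exact ⟨hA _ h1', hA _ (List.mem_of_mem_tail h2')⟩
  -- rewrite rises/descents of phi2 A as counts over prs A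
  have hphi : prs (phi2 A) = (((prs A).map Prod.swap).reverse).map (Prod.map σ σ) := by
    rw [phi2, ← hσ, prs_map, prs_reverse]
  have hr2 : rises (phi2 A) = (prs A).countP (fun p => decide (σ p.2 < σ p.1)) := by
    rw [rises, ← List.countP_eq_length_filter, ← prs, hphi, List.countP_map,
      List.countP_reverse, List.countP_map]
    rfl
  have hd2 : descents (phi2 A) = (prs A).countP (fun p => decide (σ p.1 < σ p.2)) := by
    rw [descents, ← List.countP_eq_length_filter, ← prs, hphi, List.countP_map,
      List.countP_reverse, List.countP_map]
    rfl
  have hrA : rises A = (prs A).countP (fun p => decide (p.1 < p.2)) := by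
    rw [rises, ← List.countP_eq_length_filter]; rfl
  have hdA : descents A = (prs A).countP (fun p => decide (p.2 < p.1)) := by
    rw [descents, ← List.countP_eq_length_filter]; rfl
  -- in4 = out4
  have hbd := boundary A
  rw [h1, h3] at hbd
  simp only [Option.some.injEq, if_neg (by norm_num : ¬(1:ℕ) = 4),
    if_neg (by norm_num : ¬(3:ℕ) = 4)] at hbd
  have h44 : (prs A).countP (fun p => p.2 == 4 && p.1 != 4)
      = (prs A).countP (fun p => p.1 == 4 && p.2 != 4) := by omega
  constructor
  · -- rises (phi2 A) + out4 = descents A + in4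
    have key := countP_add_countP (p1 := fun p => decide (σ p.2 < σ p.1))
      (p2 := fun p => p.1 == 4 && p.2 != 4)
      (q1 := fun p => decide (p.2 < p.1))
      (q2 := fun p => p.2 == 4 && p.1 != 4)
      (prs A) ?_
    · rw [hr2, hdA]; omega
    · intro x hx
      obtain ⟨ha, hb⟩ := hmem x hx
      rcases ha with h|h|h|h <;> rcases hb with h'|h'|h'|h' <;>
        simp [hσ, h, h']
  · have key := countP_add_countP (p1 := fun p => decide (σ p.1 < σ p.2))
      (p2 := fun p => p.2 == 4 && p.1 != 4)
      (q1 := fun p => decide (p.1 < p.2))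
      (q2 := fun p => p.1 == 4 && p.2 != 4)
      (prs A) ?_
    · rw [hd2, hrA]; omega
    · intro x hx
      obtain ⟨ha, hb⟩ := hmem x hx
      rcases ha with h|h|h|h <;> rcases hb with h'|h'|h'|h' <;>
        simp [hσ, h, h']
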